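/- Let D = {z ∈ ℂ : |z| < 1} be the open unit disk and let σ : D → D be an antiholomorphic involution, i.e. σ is a bijection of D onto itself, σ(σ(z)) = z for all z ∈ D, and the map z ↦ conj(σ(z)) is holomorphic on D. Then there exist a ∈ ℂ with |a| < 1 and θ ∈ ℝ such that the Möbius automorphism H(z) = e^{iθ}(z − a)/(1 − conj(a)·z) of D satisfies H(σ(z)) = conj(H(z)) for all z ∈ D; that is, every antiholomorphic involution of the unit disk is conjugate to complex conjugation by a holomorphic automorphism of the disk. -/

import Mathlib

open Complex Metric Set

local notation "conj'" => starRingEnd ℂ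

private noncomputable def phi (a z : ℂ) : ℂ := (z - a) / (1 - conj' a * z)

private lemma den_ne {a z : ℂ} (ha : ‖a‖ < 1) (hz : ‖z‖ < 1) :
    1 - conj' a * z ≠ 0 := by
  intro h
  have h1 : conj' a * z = 1 := by linear_combination -h
  have := congrArg (‖·‖) h1
  rw [norm_mul, Complex.norm_conj, norm_one] at this
  nlinarith [norm_nonneg a, norm_nonneg z]

private lemma phi_lt {a z : ℂ} (ha : ‖a‖ < 1) (hz : ‖z‖ < 1) :
    ‖phi a z‖ < 1 := by
  have hne := den_ne ha hz
  have key : Complex.normSq (1 - conj' a * z) - Complex.normSq (z - a)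
      = (1 - Complex.normSq a) * (1 - Complex.normSq z) := by
    simp only [Complex.normSq_apply, Complex.sub_re, Complex.sub_im, Complex.mul_re,
      Complex.mul_im, Complex.one_re, Complex.one_im, Complex.conj_re, Complex.conj_im]
    ring
  have ha' : Complex.normSq a < 1 := by
    rw [← Complex.sq_norm] ; nlinarith [norm_nonneg a]
  have hz' : Complex.normSq z < 1 := by
    rw [← Complex.sq_norm] ; nlinarith [norm_nonneg z]
  have hpos : Complex.normSq (z - a) < Complex.normSq (1 - conj' a * z) := by nlinarith
  rw [phi, norm_div, div_lt_one (by have := norm_pos_iff.mpr hne; exact this)]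
  have := hpos
  rw [← Complex.sq_norm, ← Complex.sq_norm (1 - conj' a * z)] at this
  nlinarith [norm_nonneg (z - a), norm_nonneg (1 - conj' a * z)]

private lemma phi_self (a : ℂ) : phi a a = 0 := by simp [phi]

private lemma phi_inv {a z : ℂ} (ha : ‖a‖ < 1) (hz : ‖z‖ < 1) :
    phi (-a) (phi a z) = z := by
  have h1 : 1 - conj' a * z ≠ 0 := den_ne ha hz
  have h2 : 1 - conj' a * a ≠ 0 := den_ne ha ha
  rw [phi, phi, map_neg]
  rw [div_eq_iff]
  · have h1' : 1 - z * conj' a ≠ 0 := by rwa [mul_comm]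
    field_simp
    ring
  · intro h
    apply h2
    have : (1 - -conj' a * ((z - a) / (1 - conj' a * z))) * (1 - conj' a * z) = 0 := by
      rw [h]; ring
    rw [sub_mul, one_mul, neg_mul, neg_mul, mul_assoc, div_mul_cancel₀ _ h1] at this
    linear_combination this

private lemma phi_inv' {a z : ℂ} (ha : ‖a‖ < 1) (hz : ‖z‖ < 1) :
    phi a (phi (-a) z) = z := by
  have := phi_inv (a := -a) (z := z) (by simpa using ha) hz
  rwa [neg_neg] at this

private lemma conj_phi (a z : ℂ) : conj' (phi a z) = phi (conj' a) (conj' z) := by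
  rw [phi, phi, map_div₀, map_sub, map_sub, map_one, map_mul, Complex.conj_conj]

private lemma phi_diff {a : ℂ} (ha : ‖a‖ < 1) :
    DifferentiableOn ℂ (phi a) (ball (0:ℂ) 1) := by
  apply DifferentiableOn.div
  · exact (differentiable_id.sub_const a).differentiableOn
  · exact (differentiable_const (1:ℂ)).differentiableOn.sub
      ((differentiable_id.const_mul _).differentiableOn)
  · intro z hz
    exact den_ne ha (by simpa [mem_ball_zero_iff] using hz)

private lemma phi_mapsTo {a : ℂ} (ha : ‖a‖ < 1) :
    MapsTo (phi a) (ball (0:ℂ) 1) (ball (0:ℂ) 1) := fun z hz => by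
  rw [mem_ball_zero_iff] at hz ⊢
  exact phi_lt ha hz
private lemma schwarz_abs {f : ℂ → ℂ} (hd : DifferentiableOn ℂ f (ball (0:ℂ) 1))
    (hm : MapsTo f (ball (0:ℂ) 1) (ball (0:ℂ) 1)) (h0 : f 0 = 0)
    {z : ℂ} (hz : z ∈ ball (0:ℂ) 1) : ‖f z‖ ≤ ‖z‖ := by
  have hm' : MapsTo f (ball (0:ℂ) 1) (ball (f 0) 1) := by rwa [h0]
  have hds := Complex.norm_dslope_le_div_of_mapsTo_ball hd (hm'.mono_right ball_subset_closedBall) hz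
  rw [div_one] at hds
  have heq := sub_smul_dslope f 0 z
  rw [sub_zero, h0, sub_zero, smul_eq_mul] at heq
  calc ‖f z‖ = ‖z‖ * ‖dslope f 0 z‖ := by
        rw [← heq]; simp [norm_mul]
       _ ≤ ‖z‖ * 1 := by
        refine mul_le_mul_of_nonneg_left hds (norm_nonneg z)
       _ = ‖z‖ := mul_one _

private lemma rotation_lemma {f : ℂ → ℂ} (hd : DifferentiableOn ℂ f (ball (0:ℂ) 1))
    (hm : MapsTo f (ball (0:ℂ) 1) (ball (0:ℂ) 1)) (h0 : f 0 = 0)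
    (hge : ∀ z ∈ ball (0:ℂ) 1, ‖z‖ ≤ ‖f z‖) :
    ∃ l : ℂ, ‖l‖ = 1 ∧ ∀ z ∈ ball (0:ℂ) 1, f z = l * z := by
  have hm' : MapsTo f (ball (0:ℂ) 1) (ball (f 0) 1) := by rwa [h0]
  have hz₀ : (1/2 : ℂ) ∈ ball (0:ℂ) 1 := by
    rw [mem_ball_zero_iff]; norm_num
  have habs : ‖f (1/2 : ℂ)‖ = ‖(1/2 : ℂ)‖ :=
    le_antisymm (schwarz_abs hd hm h0 hz₀) (hge _ hz₀)
  have hd_eq : ‖dslope f 0 (1/2 : ℂ)‖ = 1 / 1 := by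
    rw [dslope_of_ne f (by norm_num : (1/2:ℂ) ≠ 0), slope_def_field, h0, sub_zero, sub_zero]
    rw [norm_div, habs, div_self, one_div, inv_one]
    exact norm_ne_zero_iff.2 (by norm_num : (1/2:ℂ) ≠ 0)
  obtain ⟨C, hC, hEq⟩ := Complex.affine_of_mapsTo_ball_of_exists_norm_dslope_eq_div' hd (hm'.mono_right ball_subset_closedBall)
    ⟨1/2, hz₀, hd_eq⟩
  refine ⟨C, by simpa using hC, fun z hz => ?_⟩
  have := hEq hz
  simpa [h0, smul_eq_mul, mul_comm] using this

private lemma hasDerivAt_conj_comp {f : ℂ → ℂ} {d z : ℂ}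
    (hf : HasDerivAt f d (conj' z)) :
    HasDerivAt (fun w => conj' (f (conj' w))) (conj' d) z := by
  rw [hasDerivAt_iff_tendsto] at hf ⊢
  have hc : Filter.Tendsto (fun w : ℂ => conj' w) (nhds z) (nhds (conj' z)) :=
    (Complex.continuous_conj).tendsto z
  have := hf.comp hc
  refine this.congr (fun w => ?_)
  show ‖conj' w - conj' z‖⁻¹ * ‖f (conj' w) - f (conj' z) - (conj' w - conj' z) • d‖ = _
  have e1 : ‖conj' w - conj' z‖ = ‖w - z‖ := by
    rw [← map_sub]
    simp only [Complex.norm_conj]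
  have e2 : ‖f (conj' w) - f (conj' z) - (conj' w - conj' z) • d‖
      = ‖conj' (f (conj' w)) - conj' (f (conj' z)) - (w - z) • conj' d‖ := by
    rw [← Complex.norm_conj (f (conj' w) - f (conj' z) - (conj' w - conj' z) • d)]
    congr 1
    simp only [smul_eq_mul, map_sub, map_mul, Complex.conj_conj]
  rw [e1, e2]

private lemma diffOn_conj_comp {f : ℂ → ℂ}
    (hf : DifferentiableOn ℂ f (ball (0:ℂ) 1)) :
    DifferentiableOn ℂ (fun w => conj' (f (conj' w))) (ball (0:ℂ) 1) := by
  intro z hz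
  have hz' : conj' z ∈ ball (0:ℂ) 1 := by
    rw [mem_ball_zero_iff] at hz ⊢
    simpa [Complex.norm_conj] using hz
  have hda : DifferentiableAt ℂ f (conj' z) :=
    hf.differentiableAt (isOpen_ball.mem_nhds hz')
  exact (hasDerivAt_conj_comp hda.hasDerivAt).differentiableAt.differentiableWithinAt
/-- Every antiholomorphic involution of the open unit disk is conjugate to complex
conjugation by a holomorphic automorphism `H(z) = e^{iθ}(z−a)/(1−ā z)` of the disk. -/
theorem antiholomorphic_involution_conjugate_to_conj (σ : ℂ → ℂ)
    (hbij : Set.BijOn σ {z : ℂ | ‖z‖ < 1} {z : ℂ | ‖z‖ < 1})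
    (hinv : ∀ z : ℂ, ‖z‖ < 1 → σ (σ z) = z)
    (hholo : DifferentiableOn ℂ (fun z => (starRingEnd ℂ) (σ z)) {z : ℂ | ‖z‖ < 1}) :
    ∃ (a : ℂ) (θ : ℝ), ‖a‖ < 1 ∧
      ∀ z : ℂ, ‖z‖ < 1 →
        Complex.exp (θ * Complex.I) * (σ z - a) / (1 - (starRingEnd ℂ) a * σ z) =
          (starRingEnd ℂ)
            (Complex.exp (θ * Complex.I) * (z - a) / (1 - (starRingEnd ℂ) a * z)) := by
  have hmem : ∀ z : ℂ, z ∈ ball (0:ℂ) 1 ↔ ‖z‖ < 1 := fun z => by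
    rw [mem_ball_zero_iff]
  have hDset : {z : ℂ | ‖z‖ < 1} = ball (0:ℂ) 1 := by
    ext z; rw [Set.mem_setOf_eq, hmem]
  set τ : ℂ → ℂ := fun z => conj' (σ z) with hτdef
  have hσ : ∀ z : ℂ, ‖z‖ < 1 → ‖σ z‖ < 1 := fun z hz => hbij.mapsTo hz
  have hτabs : ∀ z : ℂ, ‖τ z‖ = ‖σ z‖ := fun z => Complex.norm_conj _
  have hστ : ∀ z : ℂ, σ z = conj' (τ z) := fun z => (Complex.conj_conj (σ z)).symm
  have hτd : DifferentiableOn ℂ τ (ball (0:ℂ) 1) := hDset ▸ hholo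
  have hτm : MapsTo τ (ball (0:ℂ) 1) (ball (0:ℂ) 1) := fun z hz => by
    rw [hmem] at hz ⊢; rw [hτabs]; exact hσ z hz
  -- Stage 1: τ = l · φ_b
  set b : ℂ := σ 0 with hbdef
  have hb : ‖b‖ < 1 := hσ 0 (by norm_num)
  have hbneg : ‖-b‖ < 1 := by simpa using hb
  set f₁ : ℂ → ℂ := fun z => τ (phi (-b) z) with hf₁def
  have hf₁d : DifferentiableOn ℂ f₁ (ball (0:ℂ) 1) :=
    hτd.comp (phi_diff hbneg) (phi_mapsTo hbneg)
  have hf₁m : MapsTo f₁ (ball (0:ℂ) 1) (ball (0:ℂ) 1) :=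
    hτm.comp (phi_mapsTo hbneg)
  have hphib0 : phi (-b) 0 = b := by simp [phi]
  have hf₁0 : f₁ 0 = 0 := by
    show τ (phi (-b) 0) = 0
    rw [hphib0, hτdef]
    show conj' (σ (σ 0)) = 0
    rw [hinv 0 (by norm_num), map_zero]
  set g₁ : ℂ → ℂ := fun w => phi b (conj' (τ (conj' w))) with hg₁def
  have hg₁d : DifferentiableOn ℂ g₁ (ball (0:ℂ) 1) := by
    refine (phi_diff hb).comp (diffOn_conj_comp hτd) (fun w hw => ?_)
    rw [hmem] at hw ⊢
    rw [Complex.norm_conj, hτabs]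
    exact hσ _ (by rwa [Complex.norm_conj])
  have hg₁m : MapsTo g₁ (ball (0:ℂ) 1) (ball (0:ℂ) 1) := fun w hw => by
    rw [hmem] at hw ⊢
    refine phi_lt hb ?_
    rw [Complex.norm_conj, hτabs]
    exact hσ _ (by rwa [Complex.norm_conj])
  have hg₁0 : g₁ 0 = 0 := by
    show phi b (conj' (τ (conj' 0))) = 0
    rw [map_zero, ← hστ 0, ← hbdef, phi_self]
  have hge₁ : ∀ z ∈ ball (0:ℂ) 1, ‖z‖ ≤ ‖f₁ z‖ := by
    intro z hz
    have hu : phi (-b) z ∈ ball (0:ℂ) 1 := phi_mapsTo hbneg hz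
    have h5 : g₁ (f₁ z) = z := by
      show phi b (conj' (τ (conj' (τ (phi (-b) z))))) = z
      rw [← hστ, ← hστ, hinv _ ((hmem _).mp hu), phi_inv' hb ((hmem _).mp hz)]
    calc ‖z‖ = ‖g₁ (f₁ z)‖ := by rw [h5]
      _ ≤ ‖f₁ z‖ := schwarz_abs hg₁d hg₁m hg₁0 (hf₁m hz)
  obtain ⟨l, hl, hfl⟩ := rotation_lemma hf₁d hf₁m hf₁0 hge₁
  have hτeq : ∀ u ∈ ball (0:ℂ) 1, τ u = l * phi b u := by
    intro u hu
    have h6 := hfl (phi b u) (phi_mapsTo hb hu)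
    have h7 : phi (-b) (phi b u) = u := phi_inv hb ((hmem _).mp hu)
    calc τ u = f₁ (phi b u) := by show τ u = τ (phi (-b) (phi b u)); rw [h7]
      _ = l * phi b u := h6
  -- Stage 2: find fixed point a of σ
  have hbrel : conj' b = -(l * b) := by
    have h1 : τ 0 = l * phi b 0 := hτeq 0 (by simp)
    have h2 : phi b 0 = -b := by simp [phi]
    have h3 : conj' b = τ 0 := rfl
    rw [h3, h1, h2]; ring
  set μ : ℂ := Complex.exp ((l.arg / 2 : ℝ) * Complex.I) with hμdef
  have hμl : μ * μ = l := by
    rw [← Complex.exp_add]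
    have h7 : ((l.arg / 2 : ℝ) : ℂ) * Complex.I + ((l.arg / 2 : ℝ) : ℂ) * Complex.I
        = (l.arg : ℝ) * Complex.I := by push_cast; ring
    rw [h7]
    conv_rhs => rw [← Complex.norm_mul_exp_arg_mul_I l]
    rw [hl, Complex.ofReal_one, one_mul]
  have hμabs : ‖μ‖ = 1 := Complex.norm_exp_ofReal_mul_I _
  have hμconj : μ * conj' μ = 1 := by
    rw [Complex.mul_conj]
    norm_cast
    rw [Complex.normSq_eq_norm_sq, hμabs]; norm_num
  have hII : Complex.I * Complex.I = -1 := Complex.I_mul_I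
  set sc : ℂ := -(Complex.I * μ * b) with hscdef
  have hscreal : conj' sc = sc := by
    rw [hscdef, map_neg, map_mul, map_mul, Complex.conj_I, hbrel, ← hμl]
    linear_combination (-(Complex.I * μ * b)) * hμconj
  set sr : ℝ := sc.re with hsrdef
  have hsc : (sr : ℂ) = sc := Complex.conj_eq_iff_re.mp hscreal
  have habs_sc : ‖sc‖ = ‖b‖ := by
    rw [hscdef]
    rw [norm_neg]
    rw [norm_mul, norm_mul, Complex.norm_I, hμabs]; ring
  have hsr : |sr| < 1 := by
    calc |sr| ≤ ‖sc‖ := Complex.abs_re_le_norm sc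
      _ < 1 := habs_sc ▸ hb
  have hbval : b = Complex.I * conj' μ * (sr : ℂ) := by
    rw [hsc, hscdef]
    linear_combination (conj' μ * μ * b) * hII - b * hμconj
  set c : ℝ := Real.sqrt (1 - sr ^ 2) with hcdef
  have hc2 : c ^ 2 = 1 - sr ^ 2 := Real.sq_sqrt (by nlinarith [_root_.sq_abs sr, abs_nonneg sr])
  have hcnn : 0 ≤ c := Real.sqrt_nonneg _
  have hcpos : (0:ℝ) < 1 + c := by linarith
  set t : ℝ := sr / (1 + c) with htdef
  have hkeyR : sr * (1 + t ^ 2) = 2 * t := by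
    rw [htdef]
    field_simp
    linear_combination sr * hc2
  have ht1 : |t| < 1 := by
    rw [htdef, abs_div, abs_of_pos hcpos, div_lt_one hcpos]
    linarith
  set a : ℂ := Complex.I * conj' μ * (t : ℂ) with hadef
  have haabs : ‖a‖ < 1 := by
    rw [hadef, norm_mul, norm_mul, Complex.norm_I, Complex.norm_conj, hμabs, Complex.norm_real]
    simpa using ht1
  have haB : a ∈ ball (0:ℂ) 1 := (hmem a).mpr haabs
  have hconjb : conj' b = -(Complex.I * μ * (sr : ℂ)) := by
    rw [hbval, map_mul, map_mul, Complex.conj_I, Complex.conj_conj, Complex.conj_ofReal]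
    ring
  have hconja : conj' a = -(Complex.I * μ * (t : ℂ)) := by
    rw [hadef, map_mul, map_mul, Complex.conj_I, Complex.conj_conj, Complex.conj_ofReal]
    ring
  have hkeyC : (sr : ℂ) * (1 + (t : ℂ) ^ 2) = 2 * (t : ℂ) := by
    exact_mod_cast hkeyR
  have hτa : τ a = conj' a := by
    rw [hτeq a haB, phi]
    have hden : 1 - conj' b * a ≠ 0 := den_ne hb haabs
    rw [← mul_div_assoc, div_eq_iff hden]
    rw [hconja, hconjb, hbval, hadef, ← hμl]
    linear_combination (-(Complex.I * μ)) * hkeyC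
      + (Complex.I * μ * ((t:ℂ) - (sr:ℂ) - (sr:ℂ) * (t:ℂ)^2)) * hμconj
      + (Complex.I * μ^2 * conj' μ * (sr:ℂ) * (t:ℂ)^2) * hII
  have hσa : σ a = a := by
    have h8 := congrArg conj' hτa
    rw [Complex.conj_conj] at h8
    calc σ a = conj' (τ a) := hστ a
      _ = a := by rw [hτa, Complex.conj_conj]
  -- Stage 3
  have haneg : ‖-a‖ < 1 := by simpa using haabs
  have hacon : ‖conj' a‖ < 1 := by rwa [Complex.norm_conj]
  set f₂ : ℂ → ℂ := fun w => phi (conj' a) (τ (phi (-a) w)) with hf₂def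
  have hf₂d : DifferentiableOn ℂ f₂ (ball (0:ℂ) 1) :=
    (phi_diff hacon).comp (hτd.comp (phi_diff haneg) (phi_mapsTo haneg))
      (hτm.comp (phi_mapsTo haneg))
  have hf₂m : MapsTo f₂ (ball (0:ℂ) 1) (ball (0:ℂ) 1) :=
    (phi_mapsTo hacon).comp (hτm.comp (phi_mapsTo haneg))
  have hphia0 : phi (-a) 0 = a := by simp [phi]
  have hf₂0 : f₂ 0 = 0 := by
    show phi (conj' a) (τ (phi (-a) 0)) = 0
    rw [hphia0, hτa, phi_self]
  have hfS : ∀ w : ℂ, conj' (f₂ w) = phi a (σ (phi (-a) w)) := by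
    intro w
    show conj' (phi (conj' a) (τ (phi (-a) w))) = _
    rw [conj_phi, Complex.conj_conj, ← hστ]
  have hg₂d : DifferentiableOn ℂ (fun w => conj' (f₂ (conj' w))) (ball (0:ℂ) 1) :=
    diffOn_conj_comp hf₂d
  have hg₂m : MapsTo (fun w => conj' (f₂ (conj' w))) (ball (0:ℂ) 1) (ball (0:ℂ) 1) := by
    intro w hw
    rw [hmem] at hw ⊢
    rw [Complex.norm_conj]
    exact (hmem _).mp (hf₂m ((hmem _).mpr (by rwa [Complex.norm_conj])))
  have hg₂0 : (fun w => conj' (f₂ (conj' w))) 0 = 0 := by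
    show conj' (f₂ (conj' 0)) = 0
    rw [map_zero, hf₂0, map_zero]
  have hge₂ : ∀ z ∈ ball (0:ℂ) 1, ‖z‖ ≤ ‖f₂ z‖ := by
    intro z hz
    have hu : phi (-a) z ∈ ball (0:ℂ) 1 := phi_mapsTo haneg hz
    have hu' : ‖phi (-a) z‖ < 1 := (hmem _).mp hu
    have hσu : ‖σ (phi (-a) z)‖ < 1 := hσ _ hu'
    have h9 : conj' (f₂ (conj' (f₂ z))) = z := by
      rw [hfS (conj' (f₂ z))]
      have h10 : conj' (f₂ z) = phi a (σ (phi (-a) z)) := hfS z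
      rw [h10]
      rw [phi_inv haabs ((hmem _).mp ((hmem _).mpr hσu))]
      rw [hinv _ hu', phi_inv' haabs ((hmem _).mp hz)]
    calc ‖z‖ = ‖conj' (f₂ (conj' (f₂ z)))‖ := by rw [h9]
      _ ≤ ‖f₂ z‖ :=
        schwarz_abs hg₂d hg₂m hg₂0 (hf₂m hz)
  obtain ⟨k, hk, hfk⟩ := rotation_lemma hf₂d hf₂m hf₂0 hge₂
  set θ : ℝ := k.arg / 2 with hθdef
  set e : ℂ := Complex.exp ((θ : ℝ) * Complex.I) with hedef
  have he2 : e * e = k := by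
    rw [hedef, ← Complex.exp_add]
    have h11 : ((θ : ℝ) : ℂ) * Complex.I + ((θ : ℝ) : ℂ) * Complex.I
        = (k.arg : ℝ) * Complex.I := by rw [hθdef]; push_cast; ring
    rw [h11]
    conv_rhs => rw [← Complex.norm_mul_exp_arg_mul_I k]
    rw [hk, Complex.ofReal_one, one_mul]
  have hene : e ≠ 0 := Complex.exp_ne_zero _
  have hek : e * conj' k = conj' e := by
    have heabs : ‖e‖ = 1 := Complex.norm_exp_ofReal_mul_I _
    have h12 : e * (e * conj' k) = e * conj' e := by
      rw [← mul_assoc, he2, Complex.mul_conj, Complex.mul_conj,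
        Complex.normSq_eq_norm_sq, Complex.normSq_eq_norm_sq, hk, heabs]
    exact mul_left_cancel₀ hene h12
  refine ⟨a, θ, haabs, fun z hz => ?_⟩
  have hzB : z ∈ ball (0:ℂ) 1 := (hmem z).mpr hz
  have hwB : phi a z ∈ ball (0:ℂ) 1 := phi_mapsTo haabs hzB
  have hfw : phi (conj' a) (τ z) = k * phi a z := by
    have h13 := hfk (phi a z) hwB
    have h14 : phi (-a) (phi a z) = z := phi_inv haabs hz
    calc phi (conj' a) (τ z) = f₂ (phi a z) := by
          show _ = phi (conj' a) (τ (phi (-a) (phi a z))); rw [h14]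
      _ = k * phi a z := h13
  have hLHS : Complex.exp ((θ:ℝ) * Complex.I) * (σ z - a) / (1 - conj' a * σ z)
      = e * phi a (σ z) := by
    rw [hedef, mul_div_assoc, phi]
  have hphiσ : phi a (σ z) = conj' (k * phi a z) := by
    rw [← hfw, conj_phi, Complex.conj_conj, ← hστ]
  rw [hLHS, hphiσ]
  have hRHS : conj' (Complex.exp ((θ:ℝ) * Complex.I) * (z - a) / (1 - conj' a * z))
      = conj' e * conj' (phi a z) := by
    rw [hedef, mul_div_assoc, map_mul, phi]
  rw [hRHS, map_mul]
  rw [← mul_assoc, hek]
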